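/- After applying QFT followed by the shift U_{m_u} on each factor of the GHZ state, the resulting state is supported exactly on basis vectors e_{b_1}⊗⋯⊗e_{b_t} with (b_1 - m_1) + ⋯ + (b_t - m_t) = 0 in ZMod d; equivalently b_1 + ⋯ + b_t = m_1 + ⋯ + m_t. -/
import Mathlib

theorem qsms_state_support (d t : ℕ) [NeZero d] (ht : 1 ≤ t)
    (ω : ℂ) (hω : ω = Complex.exp (2 * Real.pi * Complex.I / d))
    (m : Fin t → ZMod d)
    (ψ : (Fin t → ZMod d) → ℂ)
    (hψ : ∀ b, ψ b = (1 / Real.sqrt d) *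
      ∑ c : ZMod d, ∏ u, ((1 / Real.sqrt d : ℂ) * ω ^ ((b u - m u).val * c.val))) :
    ∀ b : Fin t → ZMod d, ψ b ≠ 0 ↔ ∑ u, b u = ∑ u, m u := by
  have hd : (d : ℕ) ≠ 0 := NeZero.ne d
  have hprim : IsPrimitiveRoot ω d := by
    rw [hω]; exact Complex.isPrimitiveRoot_exp d hd
  intro b
  set S : ℕ := ∑ u, (b u - m u).val with hS
  -- cast of S to ZMod d
  have hScast : ((S : ZMod d)) = ∑ u, (b u - m u) := by
    push_cast [hS]
    simp [ZMod.natCast_val, ZMod.cast_id]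
  have hcond : (d ∣ S) ↔ (∑ u, b u = ∑ u, m u) := by
    rw [← ZMod.natCast_eq_zero_iff, hScast, Finset.sum_sub_distrib, sub_eq_zero]
  -- simplify ψ b
  have h1 : ψ b = (1 / Real.sqrt d : ℂ) ^ (t + 1) *
      ∑ c : ZMod d, (ω ^ S) ^ c.val := by
    rw [hψ b]
    have : ∀ c : ZMod d,
        ∏ u, ((1 / Real.sqrt d : ℂ) * ω ^ ((b u - m u).val * c.val))
        = (1 / Real.sqrt d : ℂ) ^ t * (ω ^ S) ^ c.val := by
      intro c
      rw [Finset.prod_mul_distrib, Finset.prod_const, Finset.card_univ, Fintype.card_fin,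
        Finset.prod_pow_eq_pow_sum, ← pow_mul, hS, Finset.sum_mul]
    simp only [this, ← Finset.mul_sum, pow_succ, ← mul_assoc]
    ring
  have h2 : ∑ c : ZMod d, (ω ^ S) ^ c.val = ∑ i ∈ Finset.range d, (ω ^ S) ^ i := by
    refine Finset.sum_nbij' (fun c => c.val) (fun i => (i : ZMod d)) ?_ ?_ ?_ ?_ ?_
    · intro c _; exact Finset.mem_range.mpr (ZMod.val_lt c)
    · intro i _; exact Finset.mem_univ _
    · intro c _; simp [ZMod.natCast_val, ZMod.cast_id]
    · intro i hi; exact ZMod.val_cast_of_lt (Finset.mem_range.mp hi)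
    · intro c _; rfl
  have h3 : ∑ i ∈ Finset.range d, (ω ^ S) ^ i =
      if d ∣ S then (d : ℂ) else 0 := by
    by_cases hdS : d ∣ S
    · have : ω ^ S = 1 := (hprim.pow_eq_one_iff_dvd S).mpr hdS
      simp [this, hdS]
    · have hne : ω ^ S ≠ 1 := fun h => hdS ((hprim.pow_eq_one_iff_dvd S).mp h)
      have hpow : (ω ^ S) ^ d = 1 := by
        rw [← pow_mul, mul_comm, pow_mul, hprim.pow_eq_one, one_pow]
      rw [geom_sum_eq hne, hpow, if_neg hdS]
      simp
  have hsqrtR : Real.sqrt d ≠ 0 :=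
    ne_of_gt (Real.sqrt_pos.mpr (by exact_mod_cast Nat.pos_of_ne_zero hd))
  have hsqrt : (1 / Real.sqrt d : ℂ) ≠ 0 := by
    simp only [ne_eq, one_div, inv_eq_zero]
    exact_mod_cast hsqrtR
  rw [h1, h2, h3, ← hcond]
  constructor
  · intro h
    by_contra hc
    simp [hc] at h
  · intro h hzero
    rw [if_pos h] at hzero
    have := mul_eq_zero.mp hzero
    rcases this with h' | h'
    · exact hsqrt (pow_eq_zero_iff (by omega) |>.mp h')
    · exact hd (by exact_mod_cast h')
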